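/- Fix V > -1 and δ ∈ [0,1), and set ρ = 1/(1 + e + e^{V+1}), β₂ = (e^{V} + e^{-1})/(1 + e^{V} + e^{-1}), λ = 2e^{V}/(1 + 2e^{V}), Ψ₂ = ln(1 + e^{-1} + e^{V}), and Λ = ln(1 + 2e^{V}). Then (i) (1/(1-δρ))·β₂ + (δ(1-ρ)/((1-δ)(1-δρ)))·λ < λ/(1-δ), and (ii) 1/(1-δ) + (1/(1-δρ))·Ψ₂ + (δ(1-ρ)/((1-δ)(1-δρ)))·Λ > Λ/(1-δ). -/
import Mathlib


open Real

/-- Misalignment between engagement and utility (from Theorems 1 and 2 of the paper): for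
`V > -1`, `δ ∈ [0,1)`, `ρ = 1/(1 + e + e^{V+1})`, `β₂ = (e^V + e^{-1})/(1 + e^V + e^{-1})`,
`λ = 2e^V/(1 + 2e^V)`, `Ψ₂ = ln(1 + e^{-1} + e^V)`, `Λ = ln(1 + 2e^V)`:
(i) `Eng(PEAR) < Eng(APP)` and (ii) `Util(PEAR) > Util(APP)` in the limit `p → 0`. -/
theorem pear_app_misalignment (V δ : ℝ) (hV : -1 < V) (hδ : δ ∈ Set.Ico (0 : ℝ) 1)
    (ρ β₂ lam Ψ₂ Λ : ℝ)
    (hρ : ρ = 1 / (1 + Real.exp 1 + Real.exp (V + 1)))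
    (hβ₂ : β₂ = (Real.exp V + Real.exp (-1)) / (1 + Real.exp V + Real.exp (-1)))
    (hlam : lam = 2 * Real.exp V / (1 + 2 * Real.exp V))
    (hΨ₂ : Ψ₂ = Real.log (1 + Real.exp (-1) + Real.exp V))
    (hΛ : Λ = Real.log (1 + 2 * Real.exp V)) :
    (1 / (1 - δ * ρ)) * β₂ + (δ * (1 - ρ) / ((1 - δ) * (1 - δ * ρ))) * lam
        < lam / (1 - δ)
    ∧ 1 / (1 - δ) + (1 / (1 - δ * ρ)) * Ψ₂ + (δ * (1 - ρ) / ((1 - δ) * (1 - δ * ρ))) * Λ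
        > Λ / (1 - δ) := by
  obtain ⟨hδ0, hδ1⟩ := hδ
  have hE : (0:ℝ) < Real.exp V := Real.exp_pos V
  have hemp : (0:ℝ) < Real.exp (-1) := Real.exp_pos _
  have he1 : (2:ℝ) < Real.exp 1 := by
    have := Real.add_one_lt_exp (x := 1) one_ne_zero
    linarith
  have hden : (0:ℝ) < 1 + Real.exp 1 + Real.exp (V + 1) := by positivity
  have hρ0 : 0 < ρ := by rw [hρ]; positivity
  have hρ1 : ρ < 1 := by
    rw [hρ, div_lt_one hden]
    have := Real.exp_pos (V + 1)
    linarith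
  have h1δ : (0:ℝ) < 1 - δ := by linarith
  have h1δρ : (0:ℝ) < 1 - δ * ρ := by nlinarith
  -- e^{-1} < e^V
  have hlt : Real.exp (-1) < Real.exp V := Real.exp_lt_exp.2 hV
  constructor
  · -- part (i)
    have key : (1 / (1 - δ * ρ)) * β₂ + (δ * (1 - ρ) / ((1 - δ) * (1 - δ * ρ))) * lam
        - lam / (1 - δ) = (β₂ - lam) / (1 - δ * ρ) := by
      field_simp
      ring
    have hβlam : β₂ < lam := by
      rw [hβ₂, hlam, div_lt_div_iff₀ (by positivity) (by positivity)]
      nlinarith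
    have : (β₂ - lam) / (1 - δ * ρ) < 0 := div_neg_of_neg_of_pos (by linarith) h1δρ
    linarith [key]
  · -- part (ii)
    have key : 1 / (1 - δ) + (1 / (1 - δ * ρ)) * Ψ₂ + (δ * (1 - ρ) / ((1 - δ) * (1 - δ * ρ))) * Λ
        - Λ / (1 - δ)
        = (1 + Ψ₂ - Λ) / (1 - δ * ρ) + δ * (1 - ρ) / ((1 - δ) * (1 - δ * ρ)) := by
      field_simp
      ring
    have hΛΨ : Λ < 1 + Ψ₂ := by
      have h1 : Real.log (1 + 2 * Real.exp V)
          < Real.log (Real.exp 1 * (1 + Real.exp (-1) + Real.exp V)) := by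
        apply Real.log_lt_log (by positivity)
        have h2 : Real.exp 1 * Real.exp (-1) = 1 := by
          rw [← Real.exp_add]; norm_num
        nlinarith
      rw [Real.log_mul (by positivity) (by positivity), Real.log_exp] at h1
      rw [hΛ, hΨ₂]; linarith
    have hB : 0 ≤ δ * (1 - ρ) / ((1 - δ) * (1 - δ * ρ)) := div_nonneg (mul_nonneg hδ0 (by linarith)) (le_of_lt (mul_pos h1δ h1δρ))
    have hA : 0 < (1 + Ψ₂ - Λ) / (1 - δ * ρ) := div_pos (by linarith) h1δρ
    linarith [key]
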